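/- arXiv:2303.01469 — 3 statements merged into one kernel-verified Lean document; each statement's English description precedes it below -/
import Mathlib

section
/- Let d ≥ 1, let μ be a Borel probability measure on ℝ^d, and let t > 0. Then the Gaussian-smoothed density p_t is everywhere positive and differentiable on ℝ^d, its gradient is ∇p_t(y) = −∫_{ℝ^d} ((y−x)/t²)·(2πt²)^{−d/2} exp(−‖y−x‖₂²/(2t²)) dμ(x), and consequently the score function satisfies ∇ log p_t(y) = −(1/p_t(y)) ∫_{ℝ^d} ((y−x)/t²)·(2πt²)^{−d/2} exp(−‖y−x‖₂²/(2t²)) dμ(x) for every y ∈ ℝ^d; equivalently, ∇ log p_t(x_t) = −E[(x_t − x)/t² | x_t] where x ~ μ and x_t = x + t·z with z an independent standard Gaussian vector. -/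
open MeasureTheory ProbabilityTheory Real

noncomputable section

/-- The standard Gaussian measure on `ℝ^d`. -/
def stdGaussian (d : ℕ) : Measure (EuclideanSpace ℝ (Fin d)) :=
  (Measure.pi fun _ => gaussianReal 0 1).map (MeasurableEquiv.toLp 2 (Fin d → ℝ))

/-- The Gaussian-smoothed density of a measure `μ` on `ℝ^d` at noise level `t`:
`p_t(y) = ∫ (2πt²)^(-d/2) exp(-‖y-x‖²/(2t²)) dμ(x)`. -/
def gaussianSmoothedDensity {d : ℕ} (μ : Measure (EuclideanSpace ℝ (Fin d))) (t : ℝ)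
    (y : EuclideanSpace ℝ (Fin d)) : ℝ :=
  ∫ x, (2 * π * t ^ 2) ^ (-(d : ℝ) / 2) * Real.exp (-‖y - x‖ ^ 2 / (2 * t ^ 2)) ∂μ

lemma key_bound {t : ℝ} (ht : 0 < t) (r : ℝ) (hr : 0 ≤ r) :
    Real.exp (-r ^ 2 / (2 * t ^ 2)) * r ≤ t := by
  have hx : r ^ 2 / (2 * t ^ 2) + 1 ≤ Real.exp (r ^ 2 / (2 * t ^ 2)) :=
    Real.add_one_le_exp _
  have hE : 0 < Real.exp (r ^ 2 / (2 * t ^ 2)) := Real.exp_pos _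
  rw [show -r ^ 2 / (2 * t ^ 2) = -(r ^ 2 / (2 * t ^ 2)) by ring, Real.exp_neg]
  rw [inv_mul_le_iff₀ hE]
  have h2 : r ≤ t * (r ^ 2 / (2 * t ^ 2) + 1) := by
    have ht2 : (0:ℝ) < 2 * t ^ 2 := by positivity
    have heq : t * (r ^ 2 / (2 * t ^ 2) + 1) = r ^ 2 / (2 * t) + t := by
      field_simp
    rw [heq, ← sub_nonneg,
      show r ^ 2 / (2 * t) + t - r = (t ^ 2 + (t - r) ^ 2) / (2 * t) by field_simp; ring]
    positivity
  nlinarith [mul_le_mul_of_nonneg_left hx ht.le]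

lemma deriv_aux {d : ℕ} (t : ℝ) (ht : 0 < t) (c : ℝ) (a y : EuclideanSpace ℝ (Fin d)) :
    HasFDerivAt (fun y' : EuclideanSpace ℝ (Fin d) => c * Real.exp (-‖y' - a‖ ^ 2 / (2 * t ^ 2)))
      (innerSL ℝ ((-(c * Real.exp (-‖y - a‖ ^ 2 / (2 * t ^ 2))) / t ^ 2) • (y - a))) y := by
  have h1 : HasFDerivAt (fun y' : EuclideanSpace ℝ (Fin d) => ‖y' - a‖ ^ 2)
      (2 • (innerSL ℝ (y - a)).comp (ContinuousLinearMap.id ℝ _)) y :=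
    ((hasFDerivAt_id y).sub_const a).norm_sq
  have h2 := ((h1.const_mul (-(2 * t ^ 2)⁻¹)).exp).const_mul c
  have hfun : (fun y' : EuclideanSpace ℝ (Fin d) => c * Real.exp (-‖y' - a‖ ^ 2 / (2 * t ^ 2)))
      = fun y' => c * Real.exp (-(2 * t ^ 2)⁻¹ * ‖y' - a‖ ^ 2) := by
    funext y'; congr 1; ring
  rw [hfun]
  refine h2.congr_fderiv ?_
  ext v
  have harg : -(2 * t ^ 2)⁻¹ * ‖y - a‖ ^ 2 = -‖y - a‖ ^ 2 / (2 * t ^ 2) := by ring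
  simp [harg, real_inner_smul_left, smul_smul]
  ring

/-- **Lemma 1 of "Consistency Models"**: for any Borel probability measure `μ` on `ℝ^d`
and `t > 0`, the Gaussian-smoothed density `p_t` is everywhere positive and differentiable,
`∇p_t(y) = -∫ ((y-x)/t²)·(2πt²)^(-d/2) exp(-‖y-x‖²/(2t²)) dμ(x)`, and hence the score
satisfies `∇ log p_t(y) = -(1/p_t(y)) ∫ ((y-x)/t²)·(2πt²)^(-d/2) exp(-‖y-x‖²/(2t²)) dμ(x)`,
i.e. `∇ log p_t(x_t) = -E[(x_t - x)/t² | x_t]` for `x ~ μ`, `x_t = x + t·z`. -/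
theorem score_of_gaussian_smoothed_density
    (d : ℕ) (hd : 1 ≤ d)
    (μ : Measure (EuclideanSpace ℝ (Fin d))) [IsProbabilityMeasure μ]
    (t : ℝ) (ht : 0 < t) :
    ∀ y : EuclideanSpace ℝ (Fin d),
      0 < gaussianSmoothedDensity μ t y ∧
      DifferentiableAt ℝ (gaussianSmoothedDensity μ t) y ∧
      gradient (gaussianSmoothedDensity μ t) y =
        -∫ x, (((2 * π * t ^ 2) ^ (-(d : ℝ) / 2) *
            Real.exp (-‖y - x‖ ^ 2 / (2 * t ^ 2))) / t ^ 2) • (y - x) ∂μ ∧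
      gradient (fun y' => Real.log (gaussianSmoothedDensity μ t y')) y =
        (-(gaussianSmoothedDensity μ t y)⁻¹) •
          ∫ x, (((2 * π * t ^ 2) ^ (-(d : ℝ) / 2) *
            Real.exp (-‖y - x‖ ^ 2 / (2 * t ^ 2))) / t ^ 2) • (y - x) ∂μ := by
  intro y
  set c : ℝ := (2 * π * t ^ 2) ^ (-(d : ℝ) / 2) with hc_def
  have hc : 0 < c := by
    apply Real.rpow_pos_of_pos; positivity
  set f : EuclideanSpace ℝ (Fin d) → EuclideanSpace ℝ (Fin d) → ℝ :=
    fun y' x => c * Real.exp (-‖y' - x‖ ^ 2 / (2 * t ^ 2)) with hf_def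
  have hfpos : ∀ y' x, 0 < f y' x := fun y' x => by positivity
  have hfle : ∀ y' x, f y' x ≤ c := by
    intro y' x
    have : Real.exp (-‖y' - x‖ ^ 2 / (2 * t ^ 2)) ≤ 1 := by
      apply Real.exp_le_one_iff.mpr
      rw [neg_div]
      exact neg_nonpos.mpr (by positivity)
    calc f y' x ≤ c * 1 := by exact mul_le_mul_of_nonneg_left this hc.le
    _ = c := mul_one c
  have hcont : ∀ y' : EuclideanSpace ℝ (Fin d), Continuous (f y') := by
    intro y'; fun_prop
  have hint_f : ∀ y', Integrable (f y') μ := fun y' =>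
    (integrable_const c).mono' (hcont y').aestronglyMeasurable
      (ae_of_all _ fun x => by rw [Real.norm_eq_abs, abs_of_pos (hfpos y' x)]; exact hfle y' x)
  have hpeq : gaussianSmoothedDensity μ t = fun y' => ∫ x, f y' x ∂μ := rfl
  -- positivity
  have hpos : 0 < gaussianSmoothedDensity μ t y := by
    rw [hpeq]
    rw [integral_pos_iff_support_of_nonneg (fun x => (hfpos y x).le) (hint_f y)]
    have : Function.support (f y) = Set.univ := by
      ext x; simp [(hfpos y x).ne']
    rw [this]
    simp
  -- the pointwise gradient vector
  set w : EuclideanSpace ℝ (Fin d) → EuclideanSpace ℝ (Fin d) :=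
    fun x => (-(f y x) / t ^ 2) • (y - x) with hw_def
  have hw_norm : ∀ (y' x : EuclideanSpace ℝ (Fin d)),
      ‖(-(f y' x) / t ^ 2) • (y' - x)‖ ≤ c / t := by
    intro y' x
    rw [norm_smul, Real.norm_eq_abs, abs_div, abs_neg, abs_of_pos (hfpos y' x),
      abs_of_pos (by positivity : (0:ℝ) < t ^ 2)]
    have hkey := key_bound ht ‖y' - x‖ (norm_nonneg _)
    rw [show ‖y' - x‖ = ‖y' - x‖ from rfl]
    calc f y' x / t ^ 2 * ‖y' - x‖
        = c / t ^ 2 * (Real.exp (-‖y' - x‖ ^ 2 / (2 * t ^ 2)) * ‖y' - x‖) := by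
          rw [hf_def]; ring
      _ ≤ c / t ^ 2 * t := by
          apply mul_le_mul_of_nonneg_left hkey (by positivity)
      _ = c / t := by field_simp
  -- fderiv family
  set F' : EuclideanSpace ℝ (Fin d) → EuclideanSpace ℝ (Fin d) →
      (EuclideanSpace ℝ (Fin d) →L[ℝ] ℝ) :=
    fun y' x => innerSL ℝ ((-(f y' x) / t ^ 2) • (y' - x)) with hF'_def
  have hF'_norm : ∀ y' x, ‖F' y' x‖ ≤ c / t := by
    intro y' x
    rw [hF'_def]
    calc ‖innerSL ℝ ((-(f y' x) / t ^ 2) • (y' - x))‖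
        = ‖(-(f y' x) / t ^ 2) • (y' - x)‖ := innerSL_apply_norm (𝕜 := ℝ) _
      _ ≤ c / t := hw_norm y' x
  have hw_cont : Continuous w := by
    rw [hw_def, hf_def]; fun_prop
  have hF : HasFDerivAt (fun y' => ∫ x, f y' x ∂μ) (∫ x, F' y x ∂μ) y := by
    apply hasFDerivAt_integral_of_dominated_of_fderiv_le (Metric.ball_mem_nhds y one_pos)
    · exact Filter.Eventually.of_forall fun y' => (hcont y').aestronglyMeasurable
    · exact hint_f y
    · exact (((innerSL ℝ).continuous.comp hw_cont)).aestronglyMeasurable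
    · exact ae_of_all _ fun x y' _ => hF'_norm y' x
    · exact integrable_const _
    · exact ae_of_all _ fun x y' _ => deriv_aux (d := d) t ht c x y'
  have hw_int : Integrable w μ :=
    (integrable_const (c / t)).mono' hw_cont.aestronglyMeasurable
      (ae_of_all _ fun x => hw_norm y x)
  have hI : ∫ x, F' y x ∂μ = innerSL ℝ (∫ x, w x ∂μ) :=
    (innerSL ℝ).integral_comp_comm hw_int
  have hgrad : HasGradientAt (fun y' => ∫ x, f y' x ∂μ) (∫ x, w x ∂μ) y := by
    rw [hasGradientAt_iff_hasFDerivAt]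
    have : InnerProductSpace.toDual ℝ (EuclideanSpace ℝ (Fin d)) (∫ x, w x ∂μ)
        = ∫ x, F' y x ∂μ := by
      rw [hI]; ext z; simp [InnerProductSpace.toDual_apply_apply]
    rw [this]; exact hF
  have hint_v : Integrable (fun x => (f y x / t ^ 2) • (y - x)) μ := by
    have : (fun x => (f y x / t ^ 2) • (y - x)) = fun x => -w x := by
      funext x; rw [hw_def]; simp [neg_div, neg_smul]
    rw [this]; exact hw_int.neg
  have hw_eq : ∫ x, w x ∂μ = -∫ x, (f y x / t ^ 2) • (y - x) ∂μ := by
    rw [← integral_neg]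
    congr 1; funext x; rw [hw_def]; simp [neg_div, neg_smul]
  refine ⟨hpos, ?_, ?_, ?_⟩
  · rw [hpeq]; exact hgrad.differentiableAt
  · rw [hpeq, hgrad.gradient, hw_eq]
  · have h1 : HasDerivAt Real.log (gaussianSmoothedDensity μ t y)⁻¹
        (gaussianSmoothedDensity μ t y) := Real.hasDerivAt_log hpos.ne'
    have h2 := h1.comp_hasFDerivAt y hgrad.hasFDerivAt
    have hlog : HasGradientAt (fun y' => Real.log (gaussianSmoothedDensity μ t y'))
        ((gaussianSmoothedDensity μ t y)⁻¹ • ∫ x, w x ∂μ) y := by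
      rw [hasGradientAt_iff_hasFDerivAt,
        (InnerProductSpace.toDual ℝ (EuclideanSpace ℝ (Fin d))).map_smul]
      exact h2
    rw [hlog.gradient, hw_eq, smul_neg, ← neg_smul]
end
end

section
/- Let d ≥ 1 and 0 < ε < T, and let τ : [0,1] → [ε,T] be continuously differentiable and strictly increasing with τ'(u) > 0 for all u, τ(0) = ε, τ(1) = T; for N ≥ 2 set t_n = τ((n−1)/(N−1)). Let μ be a Borel probability measure on ℝ^d with finite second moment; let f : ℝ^d × [ε,T] → ℝ^d be twice continuously differentiable with bounded first and second derivatives; let λ : [ε,T] → ℝ be bounded and continuous; let s : ℝ^d × [ε,T] → ℝ^d be continuous with sup_{y,t} ‖s(y,t)‖₂ < ∞; assume all expectations below are finite. Define the ℓ₁ consistency distillation loss L_CD^N = (1/(N−1)) Σ_{n=1}^{N−1} E[ λ(t_n) · ‖ f(x + t_{n+1}·z, t_{n+1}) − f( x + t_{n+1}·z + (t_{n+1}−t_n)·t_{n+1}·s(x + t_{n+1}·z, t_{n+1}), t_n ) ‖₁ ], with x ~ μ and z an independent standard Gaussian vector. Then lim_{N→∞} (N−1) · L_CD^N = ∫₀¹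 E[ λ(τ(u)) · τ'(u) · ‖ τ(u) · D_y f(x + τ(u)·z, τ(u)) · s(x + τ(u)·z, τ(u)) − ∂_t f(x + τ(u)·z, τ(u)) ‖₁ ] du. -/
open MeasureTheory ProbabilityTheory Real

noncomputable section

/-- The `ℓ₁` norm on `ℝ^d`. -/
def l1norm {d : ℕ} (v : EuclideanSpace ℝ (Fin d)) : ℝ := ∑ i, |v i|

/-- The `ℓ₁` consistency distillation loss with the Euler solver for the empirical
PF ODE `dx/dt = -t·s(x,t)` over the partition `tt 1 < ⋯ < tt N`. -/
def l1ConsistencyDistillationLoss (d : ℕ) (μ : Measure (EuclideanSpace ℝ (Fin d)))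
    (lam : ℝ → ℝ)
    (f : EuclideanSpace ℝ (Fin d) → ℝ → EuclideanSpace ℝ (Fin d))
    (s : EuclideanSpace ℝ (Fin d) → ℝ → EuclideanSpace ℝ (Fin d))
    (N : ℕ) (tt : ℕ → ℝ) : ℝ :=
  (1 / ((N : ℝ) - 1)) * ∑ n ∈ Finset.Icc 1 (N - 1),
    ∫ q : EuclideanSpace ℝ (Fin d) × EuclideanSpace ℝ (Fin d),
      lam (tt n) * l1norm (f (q.1 + tt (n + 1) • q.2) (tt (n + 1)) -
        f (q.1 + tt (n + 1) • q.2 +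
            ((tt (n + 1) - tt n) * tt (n + 1)) • s (q.1 + tt (n + 1) • q.2) (tt (n + 1)))
          (tt n))
      ∂(μ.prod (stdGaussian d))


lemma l1norm_abs_sub_le {d : ℕ} (a b : EuclideanSpace ℝ (Fin d)) :
    |l1norm a - l1norm b| ≤ l1norm (a - b) := by
  unfold l1norm
  rw [← Finset.sum_sub_distrib]
  refine (Finset.abs_sum_le_sum_abs _ _).trans (Finset.sum_le_sum fun i _ => ?_)
  have : (a - b) i = a i - b i := rfl
  rw [this]
  exact (abs_abs_sub_abs_le_abs_sub _ _)

lemma l1norm_smul {d : ℕ} (c : ℝ) (v : EuclideanSpace ℝ (Fin d)) :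
    l1norm (c • v) = |c| * l1norm v := by
  unfold l1norm
  rw [Finset.mul_sum]
  refine Finset.sum_congr rfl fun i _ => ?_
  have : (c • v) i = c * v i := rfl
  rw [this, abs_mul]

lemma l1norm_neg {d : ℕ} (v : EuclideanSpace ℝ (Fin d)) : l1norm (-v) = l1norm v := by
  unfold l1norm
  refine Finset.sum_congr rfl fun i _ => ?_
  have : (-v) i = -(v i) := rfl
  rw [this, abs_neg]

lemma l1norm_le {d : ℕ} (v : EuclideanSpace ℝ (Fin d)) : l1norm v ≤ d * ‖v‖ := by
  unfold l1norm
  calc ∑ i, |v i| ≤ ∑ _i : Fin d, ‖v‖ := by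
        refine Finset.sum_le_sum fun i _ => ?_
        have := EuclideanSpace.norm_eq v
        have h1 : |v i| ≤ ‖v‖ := by
          rw [this]
          rw [show |v i| = Real.sqrt ((v i) ^ 2) from (Real.sqrt_sq_eq_abs _).symm]
          refine Real.sqrt_le_sqrt ?_
          have := Finset.single_le_sum (f := fun j => ‖v j‖ ^ 2) (fun j _ => sq_nonneg _) (Finset.mem_univ i)
          simpa [Real.norm_eq_abs, sq_abs] using this
        exact h1
    _ = d * ‖v‖ := by simp [Finset.sum_const, nsmul_eq_mul]

lemma continuous_l1norm {d : ℕ} : Continuous (l1norm (d := d)) := by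
  unfold l1norm
  exact continuous_finset_sum _ fun i _ => ((continuous_apply i).comp (PiLp.continuous_ofLp 2 _)).abs

lemma l1norm_nonneg {d : ℕ} (v : EuclideanSpace ℝ (Fin d)) : 0 ≤ l1norm v :=
  Finset.sum_nonneg fun i _ => abs_nonneg _

/-- Second-order Taylor bound from Lipschitz derivative. -/
lemma taylor_bound {X Y : Type*} [NormedAddCommGroup X] [NormedSpace ℝ X]
    [NormedAddCommGroup Y] [NormedSpace ℝ Y]
    (F : X → Y) (hF : Differentiable ℝ F) (M : ℝ) (hM : 0 ≤ M)
    (hLip : ∀ a b : X, ‖fderiv ℝ F b - fderiv ℝ F a‖ ≤ M * ‖b - a‖)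
    (a h : X) : ‖F (a + h) - F a - fderiv ℝ F a h‖ ≤ M * ‖h‖ ^ 2 := by
  set g : X → Y := fun x => F x - fderiv ℝ F a (x - a) with hg
  have hgd : ∀ x, DifferentiableAt ℝ g x := fun x =>
    (hF x).sub (((fderiv ℝ F a).differentiable.comp (differentiable_id.sub_const a)) x)
  have hgderiv : ∀ x, fderiv ℝ g x = fderiv ℝ F x - fderiv ℝ F a := by
    intro x
    have h1 : HasFDerivAt (fun x : X => fderiv ℝ F a (x - a)) (fderiv ℝ F a) x := by
      simpa [map_sub] using ((fderiv ℝ F a).hasFDerivAt (x := x)).sub_const (fderiv ℝ F a a)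
    have h2 : HasFDerivAt g (fderiv ℝ F x - fderiv ℝ F a) x :=
      ((hF x).hasFDerivAt).sub h1
    exact h2.fderiv
  have key : ‖g (a + h) - g a‖ ≤ (M * ‖h‖) * ‖(a + h) - a‖ := by
    refine (convex_closedBall a ‖h‖).norm_image_sub_le_of_norm_fderiv_le
      (fun x _ => hgd x) (fun x hx => ?_) ?_ ?_
    · rw [hgderiv x]
      refine (hLip a x).trans ?_
      exact mul_le_mul_of_nonneg_left (by simpa [Metric.mem_closedBall, dist_eq_norm] using hx) hM
    · simp only [Metric.mem_closedBall, dist_self]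
      positivity
    · simp [Metric.mem_closedBall, dist_eq_norm]
  have : g (a + h) - g a = F (a + h) - F a - fderiv ℝ F a h := by
    simp only [hg]
    have : a + h - a = h := by abel
    rw [this]
    abel_nf
    simp
  rw [this] at key
  calc ‖F (a + h) - F a - fderiv ℝ F a h‖ ≤ (M * ‖h‖) * ‖a + h - a‖ := key
    _ = M * ‖h‖ ^ 2 := by rw [show a + h - a = h by abel]; ring

section calc_layer

variable {d : ℕ}

local notation "E" => EuclideanSpace ℝ (Fin d)

lemma norm_fderiv_eq_one {X Y : Type*} [NormedAddCommGroup X] [NormedSpace ℝ X]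
    [NormedAddCommGroup Y] [NormedSpace ℝ Y] (F : X → Y) (q : X) :
    ‖fderiv ℝ F q‖ = ‖iteratedFDeriv ℝ 1 F q‖ := by
  rw [← norm_iteratedFDeriv_fderiv (n := 0), norm_iteratedFDeriv_zero]

lemma fderiv_lip {X Y : Type*} [NormedAddCommGroup X] [NormedSpace ℝ X]
    [NormedAddCommGroup Y] [NormedSpace ℝ Y] (F : X → Y) (hf : ContDiff ℝ 2 F) (M : ℝ)
    (h : ∀ q, ‖iteratedFDeriv ℝ 2 F q‖ ≤ M) (a b : X) :
    ‖fderiv ℝ F b - fderiv ℝ F a‖ ≤ M * ‖b - a‖ := by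
  have hdg : Differentiable ℝ (fderiv ℝ F) :=
    (hf.fderiv_right (m := 1) (by norm_num)).differentiable (by norm_num)
  refine convex_univ.norm_image_sub_le_of_norm_fderiv_le (fun x _ => hdg x) (fun x _ => ?_)
    (Set.mem_univ a) (Set.mem_univ b)
  rw [norm_fderiv_eq_one, norm_iteratedFDeriv_fderiv]
  exact h x

lemma fderiv_fst_apply (f : E → ℝ → E)
    (hdiff : Differentiable ℝ (fun q : E × ℝ => f q.1 q.2)) (y : E) (t : ℝ) (v : E) :
    fderiv ℝ (fun y' => f y' t) y v
      = fderiv ℝ (fun q : E × ℝ => f q.1 q.2) (y, t) (v, 0) := by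
  have h1 : HasFDerivAt (fun y' : E => f y' t)
      ((fderiv ℝ (fun q : E × ℝ => f q.1 q.2) (y, t)).comp
        ((ContinuousLinearMap.id ℝ E).prod 0)) y :=
    ((hdiff (y, t)).hasFDerivAt).comp (f := fun y' : E => (y', t)) y ((hasFDerivAt_id y).prodMk (hasFDerivAt_const t y))
  rw [h1.fderiv]
  rfl

lemma deriv_snd_apply (f : E → ℝ → E)
    (hdiff : Differentiable ℝ (fun q : E × ℝ => f q.1 q.2)) (y : E) (t : ℝ) :
    deriv (fun w => f y w) t
      = fderiv ℝ (fun q : E × ℝ => f q.1 q.2) (y, t) (0, 1) := by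
  have h1 : HasDerivAt (fun w : ℝ => f y w)
      (fderiv ℝ (fun q : E × ℝ => f q.1 q.2) (y, t) (0, 1)) t :=
    HasFDerivAt.comp_hasDerivAt t ((hdiff (y, t)).hasFDerivAt)
      ((hasDerivAt_const t y).prodMk (hasDerivAt_id t))
  exact h1.deriv

/-- The key pointwise Taylor estimate. -/
lemma pointwise_est (f : E → ℝ → E)
    (hdiff : Differentiable ℝ (fun q : E × ℝ => f q.1 q.2)) (M : ℝ) (hM : 0 ≤ M)
    (hlip : ∀ a b : E × ℝ, ‖fderiv ℝ (fun q : E × ℝ => f q.1 q.2) b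
      - fderiv ℝ (fun q : E × ℝ => f q.1 q.2) a‖ ≤ M * ‖b - a‖)
    (s : E → ℝ → E) (y : E) (t₁ t₂ : ℝ) (h12 : t₁ ≤ t₂) (K₁ : ℝ)
    (hK1 : |t₂| * ‖s y t₂‖ ≤ K₁) (hK1' : 1 ≤ K₁) :
    |l1norm (f y t₂ - f (y + ((t₂ - t₁) * t₂) • s y t₂) t₁)
      - (t₂ - t₁) * l1norm (t₂ • (fderiv ℝ (fun q : E × ℝ => f q.1 q.2) (y, t₂)) (s y t₂, 0)
          - (fderiv ℝ (fun q : E × ℝ => f q.1 q.2) (y, t₂)) (0, 1))|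
    ≤ (d : ℝ) * (M * (K₁ * (t₂ - t₁)) ^ 2) := by
  set F : E × ℝ → E := fun q => f q.1 q.2 with hF
  set DF := fderiv ℝ F with hDF
  set a : E × ℝ := (y, t₂) with ha
  set h : E × ℝ := (((t₂ - t₁) * t₂) • s y t₂, t₁ - t₂) with hh
  set Δ : ℝ := t₂ - t₁ with hΔ
  have hΔ0 : 0 ≤ Δ := sub_nonneg.mpr h12
  set V : E := t₂ • DF a (s y t₂, 0) - DF a (0, 1) with hV
  set R : E := F (a + h) - F a - DF a h with hR
  have hRle : ‖R‖ ≤ M * ‖h‖ ^ 2 := taylor_bound F hdiff M hM hlip a h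
  have hnh : ‖h‖ ≤ K₁ * Δ := by
    have h1 : ‖h‖ = max ‖((t₂ - t₁) * t₂) • s y t₂‖ |t₁ - t₂| := by
      rw [hh, Prod.norm_def]; rfl
    rw [h1]
    refine max_le ?_ ?_
    · rw [norm_smul, Real.norm_eq_abs, abs_mul]
      calc |t₂ - t₁| * |t₂| * ‖s y t₂‖ = (|t₂| * ‖s y t₂‖) * |t₂ - t₁| := by ring
        _ ≤ K₁ * Δ := by
            rw [abs_of_nonneg hΔ0]
            exact mul_le_mul_of_nonneg_right hK1 hΔ0
    · rw [abs_sub_comm, abs_of_nonneg hΔ0]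
      calc Δ = 1 * Δ := (one_mul Δ).symm
        _ ≤ K₁ * Δ := mul_le_mul_of_nonneg_right hK1' hΔ0
  have hDFh : DF a h = Δ • V := by
    have hdecomp : h = ((t₂ - t₁) * t₂) • ((s y t₂ : E), (0 : ℝ))
        + (t₁ - t₂) • ((0 : E), (1 : ℝ)) := by
      rw [hh, Prod.ext_iff]
      constructor
      · simp [hΔ]
      · simp
    rw [hdecomp]
    simp only [map_add, _root_.map_smul]
    rw [hV, hΔ]
    module
  have hFah : F (a + h) = f (y + ((t₂ - t₁) * t₂) • s y t₂) t₁ := by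
    have h2 : a + h = ((y + ((t₂ - t₁) * t₂) • s y t₂ : E), (t₁ : ℝ)) := by
      rw [ha, hh, Prod.ext_iff]
      constructor
      · simp [hΔ]
      · simp
    rw [h2]
  have hsplit : f y t₂ - f (y + ((t₂ - t₁) * t₂) • s y t₂) t₁ = -(Δ • V + R) := by
    rw [← hFah]
    have : F a = f y t₂ := rfl
    rw [← this, hR, hDFh]
    abel
  rw [hsplit, l1norm_neg]
  have e1 : (Δ : ℝ) * l1norm V = l1norm (Δ • V) := by
    rw [l1norm_smul, abs_of_nonneg hΔ0]
  rw [e1]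
  calc |l1norm (Δ • V + R) - l1norm (Δ • V)| ≤ l1norm (Δ • V + R - Δ • V) :=
        l1norm_abs_sub_le _ _
    _ = l1norm R := by rw [add_sub_cancel_left]
    _ ≤ d * ‖R‖ := l1norm_le R
    _ ≤ d * (M * ‖h‖ ^ 2) := by
        exact mul_le_mul_of_nonneg_left hRle (by positivity)
    _ ≤ (d : ℝ) * (M * (K₁ * Δ) ^ 2) := by
        refine mul_le_mul_of_nonneg_left (mul_le_mul_of_nonneg_left ?_ hM) (by positivity)
        exact pow_le_pow_left₀ (norm_nonneg _) hnh 2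

end calc_layer

set_option maxHeartbeats 2000000 in
/-- **Theorem 4 of "Consistency Models"** (continuous-time consistency distillation with
the `ℓ₁` metric): with time points `t_n = τ((n-1)/(N-1))` and the Euler solver, the
rescaled loss `(N-1) · L_CD^N` converges, as `N → ∞`, to the continuous-time `ℓ₁`
objective in the transport residual `t·(D_y f)·s - ∂ₜ f`. -/
theorem continuous_time_consistency_distillation_l1
    (d : ℕ) (hd : 1 ≤ d) (ε T : ℝ) (hε : 0 < ε) (hεT : ε < T)
    (τ τ' : ℝ → ℝ)
    (hτderiv : ∀ u ∈ Set.Icc (0 : ℝ) 1, HasDerivAt τ (τ' u) u)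
    (hτ'cont : ContinuousOn τ' (Set.Icc (0 : ℝ) 1))
    (hτ'pos : ∀ u ∈ Set.Icc (0 : ℝ) 1, 0 < τ' u)
    (hτmono : StrictMonoOn τ (Set.Icc (0 : ℝ) 1))
    (hτ0 : τ 0 = ε) (hτ1 : τ 1 = T)
    (μ : Measure (EuclideanSpace ℝ (Fin d))) [IsProbabilityMeasure μ]
    (hμ2 : Integrable (fun x => ‖x‖ ^ 2) μ)
    -- consistency model: C² with bounded first and second derivatives
    (f : EuclideanSpace ℝ (Fin d) → ℝ → EuclideanSpace ℝ (Fin d))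
    (hf : ContDiff ℝ 2 (fun q : EuclideanSpace ℝ (Fin d) × ℝ => f q.1 q.2))
    (hf_bdd : ∃ M : ℝ, ∀ q : EuclideanSpace ℝ (Fin d) × ℝ,
      ‖iteratedFDeriv ℝ 1 (fun q' : EuclideanSpace ℝ (Fin d) × ℝ => f q'.1 q'.2) q‖ ≤ M ∧
      ‖iteratedFDeriv ℝ 2 (fun q' : EuclideanSpace ℝ (Fin d) × ℝ => f q'.1 q'.2) q‖ ≤ M)
    -- bounded continuous weighting function
    (lam : ℝ → ℝ) (hlam_cont : Continuous lam)
    (hlam_bdd : ∃ M : ℝ, ∀ u ∈ Set.Icc ε T, |lam u| ≤ M)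
    -- bounded continuous score model
    (s : EuclideanSpace ℝ (Fin d) → ℝ → EuclideanSpace ℝ (Fin d))
    (hs_cont : Continuous (fun q : EuclideanSpace ℝ (Fin d) × ℝ => s q.1 q.2))
    (hs_bdd : ∃ M : ℝ, ∀ y : EuclideanSpace ℝ (Fin d), ∀ u ∈ Set.Icc ε T, ‖s y u‖ ≤ M)
    -- all expectations below are finite
    (hIntCD : ∀ t₁ ∈ Set.Icc ε T, ∀ t₂ ∈ Set.Icc ε T,
      Integrable (fun q : EuclideanSpace ℝ (Fin d) × EuclideanSpace ℝ (Fin d) =>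
        lam t₁ * l1norm (f (q.1 + t₂ • q.2) t₂ -
          f (q.1 + t₂ • q.2 + ((t₂ - t₁) * t₂) • s (q.1 + t₂ • q.2) t₂) t₁))
        (μ.prod (stdGaussian d)))
    (hIntRHS : ∀ u ∈ Set.Icc (0 : ℝ) 1,
      Integrable (fun q : EuclideanSpace ℝ (Fin d) × EuclideanSpace ℝ (Fin d) =>
        lam (τ u) * τ' u *
          l1norm (τ u • (fderiv ℝ (fun y => f y (τ u)) (q.1 + τ u • q.2))
              (s (q.1 + τ u • q.2) (τ u)) -
            deriv (fun w => f (q.1 + τ u • q.2) w) (τ u))) (μ.prod (stdGaussian d)))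
    (hIntU : IntervalIntegrable (fun u =>
      ∫ q : EuclideanSpace ℝ (Fin d) × EuclideanSpace ℝ (Fin d),
        lam (τ u) * τ' u *
          l1norm (τ u • (fderiv ℝ (fun y => f y (τ u)) (q.1 + τ u • q.2))
              (s (q.1 + τ u • q.2) (τ u)) -
            deriv (fun w => f (q.1 + τ u • q.2) w) (τ u)) ∂(μ.prod (stdGaussian d)))
      volume 0 1) :
    Filter.Tendsto (fun N : ℕ => ((N : ℝ) - 1) *
        l1ConsistencyDistillationLoss d μ lam f s N
          (fun n => τ (((n : ℝ) - 1) / ((N : ℝ) - 1))))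
      Filter.atTop
      (nhds (∫ u in (0 : ℝ)..1,
        ∫ q : EuclideanSpace ℝ (Fin d) × EuclideanSpace ℝ (Fin d),
          lam (τ u) * τ' u *
            l1norm (τ u • (fderiv ℝ (fun y => f y (τ u)) (q.1 + τ u • q.2))
                (s (q.1 + τ u • q.2) (τ u)) -
              deriv (fun w => f (q.1 + τ u • q.2) w) (τ u))
          ∂(μ.prod (stdGaussian d)))) := by
  classical
  obtain ⟨M, hM⟩ := hf_bdd
  obtain ⟨Ml, hMl⟩ := hlam_bdd
  obtain ⟨Ms, hMs⟩ := hs_bdd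
  have hεT' : ε ≤ T := hεT.le
  have hT0 : 0 < T := hε.trans hεT
  have hM0 : 0 ≤ M := le_trans (norm_nonneg _) (hM (0, ε)).1
  have hMl0 : 0 ≤ Ml := le_trans (abs_nonneg _) (hMl ε ⟨le_rfl, hεT'⟩)
  have hMs0 : 0 ≤ Ms := le_trans (norm_nonneg _) (hMs 0 ε ⟨le_rfl, hεT'⟩)
  have hFdiff : Differentiable ℝ (fun q : EuclideanSpace ℝ (Fin d) × ℝ => f q.1 q.2) :=
    hf.differentiable (by norm_num)
  have hDFcont : Continuous (fderiv ℝ (fun q : EuclideanSpace ℝ (Fin d) × ℝ => f q.1 q.2)) :=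
    (hf.fderiv_right (m := 1) (by norm_num)).continuous
  have hDFle : ∀ q, ‖fderiv ℝ (fun q' : EuclideanSpace ℝ (Fin d) × ℝ => f q'.1 q'.2) q‖ ≤ M :=
    fun q => by rw [norm_fderiv_eq_one]; exact (hM q).1
  have hDFlip := fderiv_lip _ hf M (fun q => (hM q).2)
  haveI : IsProbabilityMeasure (stdGaussian d) := by
    unfold _root_.stdGaussian
    exact Measure.isProbabilityMeasure_map (MeasurableEquiv.toLp 2 (Fin d → ℝ)).measurable.aemeasurable
  set P := μ.prod (stdGaussian d) with hPdef
  haveI : IsProbabilityMeasure P := by rw [hPdef]; infer_instance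
  -- τ facts
  have hτct : ∀ u ∈ Set.Icc (0:ℝ) 1, ContinuousAt τ u := fun u hu => (hτderiv u hu).continuousAt
  have hτmem : ∀ u ∈ Set.Icc (0:ℝ) 1, τ u ∈ Set.Icc ε T := by
    intro u hu
    constructor
    · rw [← hτ0]; exact hτmono.monotoneOn ⟨le_rfl, zero_le_one⟩ hu hu.1
    · rw [← hτ1]; exact hτmono.monotoneOn hu ⟨zero_le_one, le_rfl⟩ hu.2
  obtain ⟨u₀, hu₀, hKmax⟩ :=
    isCompact_Icc.exists_isMaxOn (Set.nonempty_Icc.mpr zero_le_one) hτ'cont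
  set K := τ' u₀ with hKdef
  have hK0 : 0 < K := hτ'pos u₀ hu₀
  have hKb : ∀ u ∈ Set.Icc (0:ℝ) 1, τ' u ≤ K := fun u hu => hKmax hu
  have hτlip : ∀ a ∈ Set.Icc (0:ℝ) 1, ∀ b ∈ Set.Icc (0:ℝ) 1, |τ b - τ a| ≤ K * |b - a| := by
    intro a ha b hb
    have := Convex.norm_image_sub_le_of_norm_hasDerivWithin_le
      (f := τ) (f' := τ') (s := Set.Icc 0 1) (C := K)
      (fun x hx => (hτderiv x hx).hasDerivWithinAt)
      (fun x hx => by rw [Real.norm_eq_abs, abs_of_pos (hτ'pos x hx)]; exact hKb x hx)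
      (convex_Icc 0 1) ha hb
    simpa [Real.norm_eq_abs] using this
  -- ψ and Φ
  set ψ : ℝ × ℝ → EuclideanSpace ℝ (Fin d) × EuclideanSpace ℝ (Fin d) → ℝ := fun p q =>
    lam (τ p.1) * l1norm (τ p.2 •
        (fderiv ℝ (fun q' : EuclideanSpace ℝ (Fin d) × ℝ => f q'.1 q'.2)
          (q.1 + τ p.2 • q.2, τ p.2)) (s (q.1 + τ p.2 • q.2) (τ p.2), 0)
      - (fderiv ℝ (fun q' : EuclideanSpace ℝ (Fin d) × ℝ => f q'.1 q'.2)
          (q.1 + τ p.2 • q.2, τ p.2)) (0, 1)) with hψdef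
  set Φ : ℝ × ℝ → ℝ := fun p => ∫ q, ψ p q ∂P with hΦdef
  set B : ℝ := Ml * ((d : ℝ) * (T * (M * Ms) + M)) with hBdef
  have hVbound : ∀ v ∈ Set.Icc (0:ℝ) 1, ∀ y : EuclideanSpace ℝ (Fin d),
      ‖τ v • (fderiv ℝ (fun q' : EuclideanSpace ℝ (Fin d) × ℝ => f q'.1 q'.2) (y, τ v))
          (s y (τ v), 0)
        - (fderiv ℝ (fun q' : EuclideanSpace ℝ (Fin d) × ℝ => f q'.1 q'.2) (y, τ v)) (0, 1)‖
        ≤ T * (M * Ms) + M := by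
    intro v hv y
    have hτv := hτmem v hv
    have h1 : ‖(fderiv ℝ (fun q' : EuclideanSpace ℝ (Fin d) × ℝ => f q'.1 q'.2) (y, τ v))
        ((s y (τ v), 0) : EuclideanSpace ℝ (Fin d) × ℝ)‖ ≤ M * Ms := by
      refine le_trans (ContinuousLinearMap.le_opNorm _ _) ?_
      refine mul_le_mul (hDFle _) ?_ (norm_nonneg _) hM0
      rw [Prod.norm_def]
      simp only [norm_zero]
      rw [max_eq_left (norm_nonneg _)]
      exact hMs y (τ v) hτv
    have h2 : ‖(fderiv ℝ (fun q' : EuclideanSpace ℝ (Fin d) × ℝ => f q'.1 q'.2) (y, τ v))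
        ((0, 1) : EuclideanSpace ℝ (Fin d) × ℝ)‖ ≤ M := by
      refine le_trans (ContinuousLinearMap.le_opNorm _ _) ?_
      have : ‖((0, 1) : EuclideanSpace ℝ (Fin d) × ℝ)‖ = 1 := by
        rw [Prod.norm_def]; simp
      rw [this, mul_one]; exact hDFle _
    refine le_trans (norm_sub_le _ _) ?_
    refine add_le_add ?_ h2
    rw [norm_smul, Real.norm_eq_abs]
    calc |τ v| * ‖_‖ ≤ T * (M * Ms) := by
          refine mul_le_mul ?_ h1 (norm_nonneg _) hT0.le
          rw [abs_of_pos (hε.trans_le hτv.1)]; exact hτv.2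
      _ = T * (M * Ms) := rfl
  have hψbd : ∀ p ∈ Set.Icc (0:ℝ) 1 ×ˢ Set.Icc (0:ℝ) 1, ∀ q, |ψ p q| ≤ B := by
    intro p hp q
    simp only [hψdef, hBdef]
    rw [abs_mul]
    refine mul_le_mul (hMl _ (hτmem p.1 hp.1)) ?_ (abs_nonneg _) hMl0
    rw [abs_of_nonneg (l1norm_nonneg _)]
    refine (l1norm_le _).trans ?_
    exact mul_le_mul_of_nonneg_left (hVbound p.2 hp.2 _) (Nat.cast_nonneg d)
  have hψqcont : ∀ p : ℝ × ℝ,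
      Continuous (fun q : EuclideanSpace ℝ (Fin d) × EuclideanSpace ℝ (Fin d) => ψ p q) := by
    intro p
    simp only [hψdef]
    have harg : Continuous (fun q : EuclideanSpace ℝ (Fin d) × EuclideanSpace ℝ (Fin d) =>
        ((q.1 + τ p.2 • q.2 : EuclideanSpace ℝ (Fin d)), τ p.2)) :=
      (continuous_fst.add (continuous_snd.const_smul (τ p.2))).prodMk continuous_const
    refine continuous_const.mul (continuous_l1norm.comp (Continuous.sub ?_ ?_))
    · refine Continuous.const_smul ?_ (τ p.2)
      exact Continuous.clm_apply (hDFcont.comp harg)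
        ((hs_cont.comp harg).prodMk continuous_const)
    · exact Continuous.clm_apply (hDFcont.comp harg) continuous_const
  have hψint : ∀ p ∈ Set.Icc (0:ℝ) 1 ×ˢ Set.Icc (0:ℝ) 1, Integrable (ψ p) P := fun p hp =>
    (integrable_const B).mono' (hψqcont p).aestronglyMeasurable
      (Filter.Eventually.of_forall fun q => by rw [Real.norm_eq_abs]; exact hψbd p hp q)
  have hΦcont : ContinuousOn Φ (Set.Icc (0:ℝ) 1 ×ˢ Set.Icc (0:ℝ) 1) := by
    intro p₀ hp₀
    rw [hΦdef]
    refine continuousWithinAt_of_dominated ?_ ?_ (integrable_const B) ?_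
    · exact Filter.eventually_of_mem self_mem_nhdsWithin
        (fun p _ => (hψqcont p).aestronglyMeasurable)
    · exact Filter.eventually_of_mem self_mem_nhdsWithin
        (fun p hp => Filter.Eventually.of_forall fun q => by
          rw [Real.norm_eq_abs]; exact hψbd p hp q)
    · refine Filter.Eventually.of_forall fun q => ?_
      refine ContinuousAt.continuousWithinAt ?_
      have hτ1c : ContinuousAt (fun p : ℝ × ℝ => τ p.1) p₀ :=
        (hτct _ hp₀.1).comp continuousAt_fst
      have hτ2c : ContinuousAt (fun p : ℝ × ℝ => τ p.2) p₀ :=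
        (hτct _ hp₀.2).comp continuousAt_snd
      have harg : ContinuousAt (fun p : ℝ × ℝ =>
          ((q.1 + τ p.2 • q.2 : EuclideanSpace ℝ (Fin d)), τ p.2)) p₀ :=
        (continuousAt_const.add (hτ2c.smul continuousAt_const)).prodMk hτ2c
      have happly : Continuous (fun z :
          (EuclideanSpace ℝ (Fin d) × ℝ →L[ℝ] EuclideanSpace ℝ (Fin d)) ×
            (EuclideanSpace ℝ (Fin d) × ℝ) => z.1 z.2) :=
        continuous_fst.clm_apply continuous_snd
      have hDFat : ContinuousAt (fun p : ℝ × ℝ =>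
          fderiv ℝ (fun q' : EuclideanSpace ℝ (Fin d) × ℝ => f q'.1 q'.2)
            (q.1 + τ p.2 • q.2, τ p.2)) p₀ := hDFcont.continuousAt.comp harg
      have hsat : ContinuousAt (fun p : ℝ × ℝ => s (q.1 + τ p.2 • q.2) (τ p.2)) p₀ :=
        hs_cont.continuousAt.comp harg
      have happ1 : ContinuousAt (fun p : ℝ × ℝ =>
          (fderiv ℝ (fun q' : EuclideanSpace ℝ (Fin d) × ℝ => f q'.1 q'.2)
            (q.1 + τ p.2 • q.2, τ p.2)) (s (q.1 + τ p.2 • q.2) (τ p.2), 0)) p₀ :=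
        happly.continuousAt.comp (hDFat.prodMk (hsat.prodMk continuousAt_const))
      have happ2 : ContinuousAt (fun p : ℝ × ℝ =>
          (fderiv ℝ (fun q' : EuclideanSpace ℝ (Fin d) × ℝ => f q'.1 q'.2)
            (q.1 + τ p.2 • q.2, τ p.2)) (0, 1)) p₀ :=
        happly.continuousAt.comp (hDFat.prodMk continuousAt_const)
      exact (hlam_cont.continuousAt.comp hτ1c).mul
        (continuous_l1norm.continuousAt.comp ((hτ2c.smul happ1).sub happ2))
  have hΦuc := (isCompact_Icc.prod isCompact_Icc).uniformContinuousOn_of_continuous hΦcont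
  -- g and the RHS integral
  set g : ℝ → ℝ := fun u => τ' u * Φ (u, u) with hgdef
  have hgcont : ContinuousOn g (Set.Icc (0:ℝ) 1) := by
    simp only [hgdef]
    exact hτ'cont.mul (hΦcont.comp
      (Continuous.continuousOn (continuous_id.prodMk continuous_id))
      (fun u hu => Set.mk_mem_prod hu hu))
  have hInner : ∀ u : ℝ,
      (∫ q : EuclideanSpace ℝ (Fin d) × EuclideanSpace ℝ (Fin d),
        lam (τ u) * τ' u *
          l1norm (τ u • (fderiv ℝ (fun y => f y (τ u)) (q.1 + τ u • q.2))
              (s (q.1 + τ u • q.2) (τ u)) -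
            deriv (fun w => f (q.1 + τ u • q.2) w) (τ u)) ∂P) = g u := by
    intro u
    have : g u = ∫ q, τ' u * ψ (u, u) q ∂P := (integral_const_mul (τ' u) (ψ (u, u))).symm
    rw [this]
    refine integral_congr_ae (Filter.Eventually.of_forall fun q => ?_)
    beta_reduce
    rw [fderiv_fst_apply f hFdiff, deriv_snd_apply f hFdiff]
    simp only [hψdef]
    ring
  have hLrw : (∫ u in (0:ℝ)..1,
      ∫ q : EuclideanSpace ℝ (Fin d) × EuclideanSpace ℝ (Fin d),
        lam (τ u) * τ' u *
          l1norm (τ u • (fderiv ℝ (fun y => f y (τ u)) (q.1 + τ u • q.2))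
              (s (q.1 + τ u • q.2) (τ u)) -
            deriv (fun w => f (q.1 + τ u • q.2) w) (τ u)) ∂P)
      = ∫ u in (0:ℝ)..1, g u :=
    intervalIntegral.integral_congr fun u _ => hInner u
  -- the key per-interval estimate
  set K₁ : ℝ := max (T * Ms) 1 with hK₁def
  have hK₁1 : (1:ℝ) ≤ K₁ := le_max_right _ _
  set C : ℝ := Ml * ((d:ℝ) * (M * K₁ ^ 2)) with hCdef
  have hC0 : 0 ≤ C := by
    rw [hCdef]; positivity
  set I : ℝ → ℝ → ℝ := fun u v =>
    ∫ q : EuclideanSpace ℝ (Fin d) × EuclideanSpace ℝ (Fin d),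
      lam (τ u) * l1norm (f (q.1 + τ v • q.2) (τ v) -
        f (q.1 + τ v • q.2 + ((τ v - τ u) * τ v) • s (q.1 + τ v • q.2) (τ v)) (τ u)) ∂P
    with hIdef
  have hIkey : ∀ u ∈ Set.Icc (0:ℝ) 1, ∀ v ∈ Set.Icc (0:ℝ) 1, u ≤ v →
      |I u v - (τ v - τ u) * Φ (u, v)| ≤ C * (τ v - τ u) ^ 2 := by
    intro u hu v hv huv
    have hτuv : τ u ≤ τ v := hτmono.monotoneOn hu hv huv
    have hint1 := hIntCD (τ u) (hτmem u hu) (τ v) (hτmem v hv)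
    have hint2 : Integrable (fun q => (τ v - τ u) * ψ (u, v) q) P :=
      (hψint (u, v) (Set.mk_mem_prod hu hv)).const_mul _
    have heq : I u v - (τ v - τ u) * Φ (u, v)
        = ∫ q, (lam (τ u) * l1norm (f (q.1 + τ v • q.2) (τ v) -
            f (q.1 + τ v • q.2 + ((τ v - τ u) * τ v) • s (q.1 + τ v • q.2) (τ v)) (τ u))
          - (τ v - τ u) * ψ (u, v) q) ∂P := by
      rw [integral_sub hint1 hint2, integral_const_mul (τ v - τ u) (ψ (u, v))]
    rw [heq]
    have hb : ∀ q : EuclideanSpace ℝ (Fin d) × EuclideanSpace ℝ (Fin d),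
        ‖lam (τ u) * l1norm (f (q.1 + τ v • q.2) (τ v) -
            f (q.1 + τ v • q.2 + ((τ v - τ u) * τ v) • s (q.1 + τ v • q.2) (τ v)) (τ u))
          - (τ v - τ u) * ψ (u, v) q‖ ≤ C * (τ v - τ u) ^ 2 := by
      intro q
      have hK1q : |τ v| * ‖s (q.1 + τ v • q.2) (τ v)‖ ≤ K₁ := by
        refine le_trans ?_ (le_max_left (T * Ms) 1)
        refine mul_le_mul ?_ (hMs _ _ (hτmem v hv)) (norm_nonneg _) hT0.le
        rw [abs_of_pos (hε.trans_le (hτmem v hv).1)]; exact (hτmem v hv).2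
      have hpt := pointwise_est f hFdiff M hM0 hDFlip s (q.1 + τ v • q.2) (τ u) (τ v)
        hτuv K₁ hK1q hK₁1
      rw [Real.norm_eq_abs]
      simp only [hψdef]
      have hfact : lam (τ u) * l1norm (f (q.1 + τ v • q.2) (τ v) -
            f (q.1 + τ v • q.2 + ((τ v - τ u) * τ v) • s (q.1 + τ v • q.2) (τ v)) (τ u))
          - (τ v - τ u) * (lam (τ u) * l1norm (τ v •
            (fderiv ℝ (fun q' : EuclideanSpace ℝ (Fin d) × ℝ => f q'.1 q'.2)
              (q.1 + τ v • q.2, τ v)) (s (q.1 + τ v • q.2) (τ v), 0)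
            - (fderiv ℝ (fun q' : EuclideanSpace ℝ (Fin d) × ℝ => f q'.1 q'.2)
              (q.1 + τ v • q.2, τ v)) (0, 1)))
          = lam (τ u) * (l1norm (f (q.1 + τ v • q.2) (τ v) -
            f (q.1 + τ v • q.2 + ((τ v - τ u) * τ v) • s (q.1 + τ v • q.2) (τ v)) (τ u))
          - (τ v - τ u) * l1norm (τ v •
            (fderiv ℝ (fun q' : EuclideanSpace ℝ (Fin d) × ℝ => f q'.1 q'.2)
              (q.1 + τ v • q.2, τ v)) (s (q.1 + τ v • q.2) (τ v), 0)
            - (fderiv ℝ (fun q' : EuclideanSpace ℝ (Fin d) × ℝ => f q'.1 q'.2)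
              (q.1 + τ v • q.2, τ v)) (0, 1))) := by ring
      rw [hfact, abs_mul]
      calc |lam (τ u)| * |_| ≤ Ml * ((d:ℝ) * (M * (K₁ * (τ v - τ u)) ^ 2)) :=
            mul_le_mul (hMl _ (hτmem u hu)) hpt (abs_nonneg _) hMl0
        _ = C * (τ v - τ u) ^ 2 := by rw [hCdef]; ring
    calc |∫ q, _ ∂P| ≤ ∫ _q : EuclideanSpace ℝ (Fin d) × EuclideanSpace ℝ (Fin d),
          C * (τ v - τ u) ^ 2 ∂P := by
          rw [← Real.norm_eq_abs]
          exact norm_integral_le_of_norm_le (integrable_const _)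
            (Filter.Eventually.of_forall hb)
      _ = C * (τ v - τ u) ^ 2 := by simp
  -- FTC pieces
  have hsub : ∀ a ∈ Set.Icc (0:ℝ) 1, ∀ b ∈ Set.Icc (0:ℝ) 1, a ≤ b →
      Set.uIcc a b ⊆ Set.Icc (0:ℝ) 1 := by
    intro a ha b hb hab
    rw [Set.uIcc_of_le hab]
    exact Set.Icc_subset_Icc ha.1 hb.2
  have hτ'ii : ∀ a ∈ Set.Icc (0:ℝ) 1, ∀ b ∈ Set.Icc (0:ℝ) 1, a ≤ b →
      IntervalIntegrable τ' volume a b := fun a ha b hb hab =>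
    (hτ'cont.mono (hsub a ha b hb hab)).intervalIntegrable
  have hFTC : ∀ a ∈ Set.Icc (0:ℝ) 1, ∀ b ∈ Set.Icc (0:ℝ) 1, a ≤ b →
      (∫ u in a..b, τ' u) = τ b - τ a := fun a ha b hb hab =>
    intervalIntegral.integral_eq_sub_of_hasDerivAt
      (fun x hx => hτderiv x (hsub a ha b hb hab hx)) (hτ'ii a ha b hb hab)
  -- the limit
  rw [hLrw, Metric.tendsto_atTop]
  intro δ hδ
  set ω : ℝ := δ / (2 * (K + 1)) with hωdef
  have hω0 : 0 < ω := by rw [hωdef]; positivity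
  obtain ⟨η, hη0, hηuc⟩ := Metric.uniformContinuousOn_iff.mp hΦuc ω hω0
  obtain ⟨N₁, hN₁⟩ := exists_nat_gt (max (1/η) (2 * (C * (K * (T - ε))) / δ))
  refine ⟨max (N₁ + 2) 2, fun N hN => ?_⟩
  have hN2 : 2 ≤ N := le_trans (le_max_right _ _) hN
  have hNR : (1:ℝ) ≤ (N:ℝ) - 1 := by
    have : (2:ℝ) ≤ (N:ℝ) := by exact_mod_cast hN2
    linarith
  have hNR0 : (0:ℝ) < (N:ℝ) - 1 := by linarith
  have hNgt : max (1/η) (2 * (C * (K * (T - ε))) / δ) < (N:ℝ) - 1 := by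
    have h1 : N₁ + 2 ≤ N := le_trans (le_max_left _ _) hN
    have h2 : ((N₁:ℝ) + 2) ≤ (N:ℝ) := by exact_mod_cast h1
    exact hN₁.trans_le (by linarith)
  have hηN : 1/((N:ℝ) - 1) < η := by
    rw [div_lt_iff₀ hNR0]
    have h1 : 1/η < (N:ℝ) - 1 := lt_of_le_of_lt (le_max_left _ _) hNgt
    have := (div_lt_iff₀ hη0).mp h1
    linarith [mul_comm η ((N:ℝ) - 1)]
  set m := N - 1 with hmdef
  have hm1 : 1 ≤ m := by omega
  have hmcast : ((m:ℕ):ℝ) = (N:ℝ) - 1 := by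
    rw [hmdef, Nat.cast_sub (by omega)]; norm_num
  set v : ℕ → ℝ := fun i => (i:ℝ) / ((N:ℝ) - 1) with hvdef
  have hvmem : ∀ i ≤ m, v i ∈ Set.Icc (0:ℝ) 1 := by
    intro i hi
    simp only [hvdef]
    constructor
    · positivity
    · rw [div_le_one hNR0, ← hmcast]
      exact_mod_cast hi
  have hvle : ∀ i, v i ≤ v (i+1) := by
    intro i
    simp only [hvdef]
    push_cast
    gcongr
    linarith
  have hvstep : ∀ i, v (i+1) - v i = 1/((N:ℝ) - 1) := by
    intro i
    simp only [hvdef]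
    push_cast
    ring
  -- A_N as a sum
  have hA : ((N:ℝ) - 1) * l1ConsistencyDistillationLoss d μ lam f s N
        (fun n => τ (((n:ℝ) - 1) / ((N:ℝ) - 1)))
      = ∑ i ∈ Finset.range m, I (v i) (v (i+1)) := by
    rw [l1ConsistencyDistillationLoss, ← mul_assoc, mul_one_div, div_self (ne_of_gt hNR0), one_mul]
    have hIcc : Finset.Icc 1 (N-1) = Finset.Ico 1 N := by
      rw [← Finset.Ico_add_one_right_eq_Icc, Nat.sub_add_cancel (by omega)]
    rw [hIcc, Finset.sum_Ico_eq_sum_range]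
    refine Finset.sum_congr rfl fun i _ => ?_
    have e1 : (((1+i : ℕ):ℝ) - 1)/((N:ℝ) - 1) = v i := by
      simp only [hvdef]; push_cast; ring
    have e2 : (((1+i+1 : ℕ):ℝ) - 1)/((N:ℝ) - 1) = v (i+1) := by
      simp only [hvdef]; push_cast; ring
    show (∫ q : EuclideanSpace ℝ (Fin d) × EuclideanSpace ℝ (Fin d),
      lam (τ ((((1+i : ℕ):ℝ) - 1)/((N:ℝ) - 1))) *
        l1norm (f (q.1 + τ ((((1+i+1 : ℕ):ℝ) - 1)/((N:ℝ) - 1)) • q.2)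
            (τ ((((1+i+1 : ℕ):ℝ) - 1)/((N:ℝ) - 1))) -
          f (q.1 + τ ((((1+i+1 : ℕ):ℝ) - 1)/((N:ℝ) - 1)) • q.2 +
              ((τ ((((1+i+1 : ℕ):ℝ) - 1)/((N:ℝ) - 1)) - τ ((((1+i : ℕ):ℝ) - 1)/((N:ℝ) - 1))) *
                τ ((((1+i+1 : ℕ):ℝ) - 1)/((N:ℝ) - 1))) •
                s (q.1 + τ ((((1+i+1 : ℕ):ℝ) - 1)/((N:ℝ) - 1)) • q.2)
                  (τ ((((1+i+1 : ℕ):ℝ) - 1)/((N:ℝ) - 1))))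
            (τ ((((1+i : ℕ):ℝ) - 1)/((N:ℝ) - 1)))) ∂P) = I (v i) (v (i+1))
    rw [e1, e2]
  -- L as a sum
  have hgii : ∀ i, i < m → IntervalIntegrable g volume (v i) (v (i+1)) := by
    intro i hi
    refine (hgcont.mono (hsub (v i) (hvmem i (by omega)) (v (i+1))
      (hvmem (i+1) (by omega)) (hvle i))).intervalIntegrable
  have hv0 : v 0 = 0 := by simp only [hvdef]; simp
  have hvm : v m = 1 := by simp only [hvdef]; rw [hmcast, div_self (ne_of_gt hNR0)]
  have hL : (∫ u in (0:ℝ)..1, g u) = ∑ i ∈ Finset.range m, ∫ u in (v i)..(v (i+1)), g u := by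
    rw [intervalIntegral.sum_integral_adjacent_intervals hgii, hv0, hvm]
  -- per-piece estimate
  have hpiece : ∀ i, i < m → |I (v i) (v (i+1)) - ∫ u in (v i)..(v (i+1)), g u|
      ≤ C * (K / ((N:ℝ) - 1)) * (τ (v (i+1)) - τ (v i)) + K * ω * (1/((N:ℝ) - 1)) := by
    intro i hi
    have hvi := hvmem i (by omega)
    have hvi1 := hvmem (i+1) (by omega)
    have hΔ0 : 0 ≤ τ (v (i+1)) - τ (v i) :=
      sub_nonneg.mpr (hτmono.monotoneOn hvi hvi1 (hvle i))
    have hΔle : τ (v (i+1)) - τ (v i) ≤ K / ((N:ℝ) - 1) := by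
      have := hτlip (v i) hvi (v (i+1)) hvi1
      rw [abs_of_nonneg hΔ0, abs_of_nonneg (sub_nonneg.mpr (hvle i))] at this
      rw [hvstep i] at this
      calc τ (v (i+1)) - τ (v i) ≤ K * (1/((N:ℝ) - 1)) := this
        _ = K / ((N:ℝ) - 1) := by ring
    have hpart1 : |I (v i) (v (i+1)) - (τ (v (i+1)) - τ (v i)) * Φ (v i, v (i+1))|
        ≤ C * (K / ((N:ℝ) - 1)) * (τ (v (i+1)) - τ (v i)) := by
      refine (hIkey (v i) hvi (v (i+1)) hvi1 (hvle i)).trans ?_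
      rw [pow_two, ← mul_assoc]
      exact mul_le_mul_of_nonneg_right
        (mul_le_mul_of_nonneg_left hΔle hC0) hΔ0
    have hpart2 : |(τ (v (i+1)) - τ (v i)) * Φ (v i, v (i+1)) - ∫ u in (v i)..(v (i+1)), g u|
        ≤ K * ω * (1/((N:ℝ) - 1)) := by
      have hconst : (τ (v (i+1)) - τ (v i)) * Φ (v i, v (i+1))
          = ∫ u in (v i)..(v (i+1)), τ' u * Φ (v i, v (i+1)) := by
        rw [intervalIntegral.integral_mul_const, hFTC (v i) hvi (v (i+1)) hvi1 (hvle i)]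
      have hii1 : IntervalIntegrable (fun u => τ' u * Φ (v i, v (i+1))) volume (v i) (v (i+1)) :=
        (hτ'ii (v i) hvi (v (i+1)) hvi1 (hvle i)).mul_const _
      rw [hconst, ← intervalIntegral.integral_sub hii1 (hgii i hi)]
      have hbnd : ∀ u ∈ Set.uIoc (v i) (v (i+1)),
          ‖τ' u * Φ (v i, v (i+1)) - g u‖ ≤ K * ω := by
        intro u hu
        have hu' : u ∈ Set.Icc (v i) (v (i+1)) := by
          rw [Set.uIoc_of_le (hvle i)] at hu
          exact ⟨hu.1.le, hu.2⟩
        have hu01 : u ∈ Set.Icc (0:ℝ) 1 := ⟨hvi.1.trans hu'.1, hu'.2.trans hvi1.2⟩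
        have hΦd : |Φ (v i, v (i+1)) - Φ (u, u)| < ω := by
          have hmemsq1 : (v i, v (i+1)) ∈ Set.Icc (0:ℝ) 1 ×ˢ Set.Icc (0:ℝ) 1 :=
            Set.mk_mem_prod hvi hvi1
          have hmemsq2 : ((u:ℝ), (u:ℝ)) ∈ Set.Icc (0:ℝ) 1 ×ˢ Set.Icc (0:ℝ) 1 :=
            Set.mk_mem_prod hu01 hu01
          have hdist : dist ((v i, v (i+1)) : ℝ × ℝ) ((u, u) : ℝ × ℝ) < η := by
            rw [Prod.dist_eq]
            refine lt_of_le_of_lt (max_le ?_ ?_) hηN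
            · rw [Real.dist_eq, abs_of_nonpos (by linarith [hu'.1])]
              have := hvstep i
              linarith [hu'.2]
            · rw [Real.dist_eq, abs_of_nonneg (by linarith [hu'.2])]
              have := hvstep i
              linarith [hu'.1]
          have := hηuc _ hmemsq1 _ hmemsq2 hdist
          rwa [Real.dist_eq] at this
        simp only [hgdef]
        have : τ' u * Φ (v i, v (i+1)) - τ' u * Φ (u, u) = τ' u * (Φ (v i, v (i+1)) - Φ (u, u)) := by
          ring
        rw [this, Real.norm_eq_abs, abs_mul]
        refine mul_le_mul ?_ hΦd.le (abs_nonneg _) hK0.le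
        rw [abs_of_pos (hτ'pos u hu01)]
        exact hKb u hu01
      refine le_trans (le_of_eq (Real.norm_eq_abs _).symm) ?_
      refine le_trans (intervalIntegral.norm_integral_le_of_norm_le_const hbnd) ?_
      rw [abs_of_nonneg (by linarith [hvstep i, hvle i] : (0:ℝ) ≤ v (i+1) - v i), hvstep i]
    calc |I (v i) (v (i+1)) - ∫ u in (v i)..(v (i+1)), g u|
        ≤ |I (v i) (v (i+1)) - (τ (v (i+1)) - τ (v i)) * Φ (v i, v (i+1))|
          + |(τ (v (i+1)) - τ (v i)) * Φ (v i, v (i+1)) - ∫ u in (v i)..(v (i+1)), g u| := by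
          exact abs_sub_le _ _ _
      _ ≤ _ := add_le_add hpart1 hpart2
  -- put it together
  rw [Real.dist_eq, hA, hL, ← Finset.sum_sub_distrib]
  have htel : ∑ i ∈ Finset.range m, (τ (v (i+1)) - τ (v i)) = T - ε := by
    rw [Finset.sum_range_sub (fun i => τ (v i))]
    rw [hvm, hv0, hτ1, hτ0]
  calc |∑ i ∈ Finset.range m, (I (v i) (v (i+1)) - ∫ u in (v i)..(v (i+1)), g u)|
      ≤ ∑ i ∈ Finset.range m,
        |I (v i) (v (i+1)) - ∫ u in (v i)..(v (i+1)), g u| := Finset.abs_sum_le_sum_abs _ _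
    _ ≤ ∑ i ∈ Finset.range m,
        (C * (K / ((N:ℝ) - 1)) * (τ (v (i+1)) - τ (v i)) + K * ω * (1/((N:ℝ) - 1))) :=
        Finset.sum_le_sum fun i hi => hpiece i (Finset.mem_range.mp hi)
    _ = C * (K / ((N:ℝ) - 1)) * (T - ε) + K * ω := by
        rw [Finset.sum_add_distrib, ← Finset.mul_sum, htel, Finset.sum_const,
          Finset.card_range, nsmul_eq_mul, hmcast]
        field_simp
    _ < δ := by
        have hfirst : C * (K / ((N:ℝ) - 1)) * (T - ε) < δ / 2 := by
          have h1 : 2 * (C * (K * (T - ε))) / δ < (N:ℝ) - 1 :=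
            lt_of_le_of_lt (le_max_right _ _) hNgt
          have h2 : 2 * (C * (K * (T - ε))) < ((N:ℝ) - 1) * δ := (div_lt_iff₀ hδ).mp h1
          rw [show C * (K / ((N:ℝ) - 1)) * (T - ε) = (C * (K * (T - ε))) / ((N:ℝ) - 1) by ring]
          rw [div_lt_iff₀ hNR0]
          linarith
        have hsecond : K * ω < δ / 2 := by
          rw [hωdef]
          rw [mul_div_assoc']
          rw [div_lt_iff₀ (by positivity : (0:ℝ) < 2 * (K + 1))]
          nlinarith [hδ, hK0]
        linarith
end
end

section
/- Let d ≥ 1 and 0 < ε < T. Let s : ℝ^d × [ε,T] → ℝ^d be continuous and let f : ℝ^d × [ε,T] → ℝ^d be continuously differentiable with f(x, ε) = x for every x ∈ ℝ^d (the boundary condition) and ∂_t f(x,t) − t · D_x f(x,t) · s(x,t) = 0 for every (x,t) ∈ ℝ^d × [ε,T]. Then for every PF-ODE solution γ : [ε,T] → ℝ^d and every t ∈ [ε,T], f(γ(t), t) = γ(ε); that is, f is self-consistent: its outputs are constant along every trajectory of the ODE and equal the trajectory's origin. -/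
noncomputable section

/-- A PF-ODE solution on `[ε, T]` for the score field `s`: a differentiable curve
`γ : [ε,T] → ℝ^d` with `γ'(u) = -u • s (γ u) u` for all `u ∈ [ε,T]`. -/
def IsPFSolution {d : ℕ} (ε T : ℝ)
    (s : EuclideanSpace ℝ (Fin d) → ℝ → EuclideanSpace ℝ (Fin d))
    (γ : ℝ → EuclideanSpace ℝ (Fin d)) : Prop :=
  ∀ u ∈ Set.Icc ε T, HasDerivWithinAt γ (-(u • s (γ u) u)) (Set.Icc ε T) u

/-- **Converse of the remark after Theorem 3, Consistency Models**: a continuously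
differentiable `f` satisfying the boundary condition `f(·, ε) = id` and the transport
equation `∂ₜ f(x,t) = t • (Dₓ f(x,t)) (s x t)` is self-consistent: along any PF-ODE
trajectory `γ` one has `f (γ t) t = γ ε`. -/
theorem transport_equation_implies_self_consistency
    (d : ℕ) (hd : 1 ≤ d) (ε T : ℝ) (hε : 0 < ε) (hεT : ε < T)
    (s : EuclideanSpace ℝ (Fin d) → ℝ → EuclideanSpace ℝ (Fin d))
    (hs : ContinuousOn (fun q : EuclideanSpace ℝ (Fin d) × ℝ => s q.1 q.2)
      (Set.univ ×ˢ Set.Icc ε T))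
    (f : EuclideanSpace ℝ (Fin d) → ℝ → EuclideanSpace ℝ (Fin d))
    (hf : ContDiff ℝ 1 (fun q : EuclideanSpace ℝ (Fin d) × ℝ => f q.1 q.2))
    (hboundary : ∀ x : EuclideanSpace ℝ (Fin d), f x ε = x)
    (htransport : ∀ (x : EuclideanSpace ℝ (Fin d)), ∀ t ∈ Set.Icc ε T,
      deriv (fun u => f x u) t = t • (fderiv ℝ (fun y => f y t) x) (s x t)) :
    ∀ γ : ℝ → EuclideanSpace ℝ (Fin d), IsPFSolution ε T s γ →
      ∀ t ∈ Set.Icc ε T, f (γ t) t = γ ε := by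
  intro γ hγ t ht
  set F : EuclideanSpace ℝ (Fin d) × ℝ → EuclideanSpace ℝ (Fin d) :=
    fun q => f q.1 q.2 with hFdef
  have hFdiff : Differentiable ℝ F := hf.differentiable one_ne_zero
  set g : ℝ → EuclideanSpace ℝ (Fin d) := fun u => f (γ u) u with hgdef
  -- derivative of g is zero on Icc
  have hg0 : ∀ u ∈ Set.Icc ε T, HasDerivWithinAt g 0 (Set.Icc ε T) u := by
    intro u hu
    have hγ' := hγ u hu
    have hpair : HasDerivWithinAt (fun v => (γ v, v))
        ((-(u • s (γ u) u), 1) : EuclideanSpace ℝ (Fin d) × ℝ) (Set.Icc ε T) u :=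
      HasDerivWithinAt.prodMk hγ' (hasDerivWithinAt_id u _)
    set L := fderiv ℝ F (γ u, u) with hL
    have hFd : HasFDerivAt F L (γ u, u) := (hFdiff (γ u, u)).hasFDerivAt
    have hcomp : HasDerivWithinAt g (L (-(u • s (γ u) u), 1)) (Set.Icc ε T) u := by
      have := hFd.comp_hasDerivWithinAt (f := fun v => (γ v, v)) u hpair
      exact this
    -- partial derivative in x
    have hA : fderiv ℝ (fun y => f y u) (γ u)
        = L.comp ((ContinuousLinearMap.id ℝ _).prod 0) := by
      have h1 : HasFDerivAt (fun y : EuclideanSpace ℝ (Fin d) => (y, u))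
          ((ContinuousLinearMap.id ℝ _).prod 0) (γ u) :=
        HasFDerivAt.prodMk (hasFDerivAt_id _) (hasFDerivAt_const _ _)
      have := (hFd.comp (γ u) h1)
      exact this.fderiv
    -- partial derivative in t
    have hB : deriv (fun v => f (γ u) v) u = L (0, 1) := by
      have h1 : HasDerivAt (fun v : ℝ => ((γ u : EuclideanSpace ℝ (Fin d)), v)) (0, 1) u :=
        HasDerivAt.prodMk (hasDerivAt_const u (γ u)) (hasDerivAt_id u)
      have := hFd.comp_hasDerivAt u h1
      exact this.deriv
    have hzero : L (-(u • s (γ u) u), 1) = 0 := by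
      have hsplit : ((-(u • s (γ u) u), 1) : EuclideanSpace ℝ (Fin d) × ℝ)
          = (-(u • s (γ u) u), 0) + (0, 1) := by simp
      rw [hsplit, map_add]
      have hxpart : L (-(u • s (γ u) u), 0)
          = -(u • (fderiv ℝ (fun y => f y u) (γ u)) (s (γ u) u)) := by
        have hv : ((-(u • s (γ u) u), (0:ℝ)) : EuclideanSpace ℝ (Fin d) × ℝ)
            = -(u • ((s (γ u) u, 0) : EuclideanSpace ℝ (Fin d) × ℝ)) := by
          simp [Prod.ext_iff]
        rw [hA, hv, map_neg, map_smul]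
        simp [ContinuousLinearMap.comp_apply]
      have htpart : L (0, 1) = u • (fderiv ℝ (fun y => f y u) (γ u)) (s (γ u) u) := by
        rw [← hB, htransport (γ u) u hu]
      rw [hxpart, htpart]
      abel
    rw [hzero] at hcomp
    exact hcomp
  -- g is constant on Icc
  have hgcont : ContinuousOn g (Set.Icc ε T) := by
    have hγc : ContinuousOn γ (Set.Icc ε T) := fun u hu =>
      (hγ u hu).continuousWithinAt
    exact hf.continuous.comp_continuousOn (hγc.prodMk continuousOn_id)
  have hconst : ∀ u ∈ Set.Icc ε T, g u = g ε := by
    apply constant_of_has_deriv_right_zero hgcont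
    intro u hu
    exact (hg0 u (Set.mem_Icc_of_Ico hu)).mono_of_mem_nhdsWithin (Icc_mem_nhdsGE_of_mem hu)
  have := hconst t ht
  simpa [hgdef, hboundary] using this
end
end
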